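/- Let 0 ≤ α < p, 0 ≤ β < p, 0 ≤ μ < 1, 0 ≤ δ ≤ 1, −1 ≤ B < A ≤ 1. Define a₁ = (A−B)(p−α)/([(1−B)+(A−B)(p−α)](1−μ)(p+δ)) and a₂ = (A−B)(p−β)/([(1−B)+(A−B)(p−β)](1−μ)(p+δ)). Then the single-term sequences with (p+1)-coefficient a₁ (resp. a₂) satisfy with equality the coefficient inequalities defining R_{μ,p}^δ(α;A,B) and R_{μ,p}^δ(β;A,B), and the product sequence with (p+1)-coefficient a₁a₂ satisfies with equality the inequality defining R_{μ,p}^δ(ξ;A,B), where ξ = p − (1−B)(A−B)(p−α)(p−β)/([(1−B)+(A−B)(p−α)][(1−B)+(A−B)(p−β)](1−μ)(p+δ) − (A−B)²(p−α)(p−β)), assuming the denominator is positive. -/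

import Mathlib

open Real

/-- Weight of the defining inequality of the class R_{μ,p}^δ(γ;A,B), at shifted index p+1+k. -/
noncomputable def wOrd (p : ℕ) (γ μ δ A B : ℝ) (k : ℕ) : ℝ :=
  ((1 - B) * ((k : ℝ) + 1) + (A - B) * ((p : ℝ) - γ)) * (1 - μ) ^ (k + 1) *
    (Real.Gamma ((p : ℝ) + 1 + (k : ℝ) + δ) / Real.Gamma ((p : ℝ) + δ))


lemma wOrd_zero (p : ℕ) (γ μ δ A B : ℝ) (hpδ : (0:ℝ) < (p : ℝ) + δ) :
    wOrd p γ μ δ A B 0 = ((1 - B) + (A - B) * ((p:ℝ) - γ)) * (1 - μ) * ((p:ℝ) + δ) := by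
  have h : ((p:ℝ) + 1 + ((0:ℕ) : ℝ) + δ) = ((p:ℝ) + δ) + 1 := by push_cast; ring
  have hG : Real.Gamma ((p:ℝ) + δ) ≠ 0 := (Real.Gamma_pos_of_pos hpδ).ne'
  simp only [wOrd, h, Real.Gamma_add_one hpδ.ne']
  field_simp
  push_cast
  ring

set_option maxHeartbeats 1000000 in
lemma stmt17_alg (P b c x y m n : ℝ)
    (hE : (b + c*x) * (b + c*y) * m * n - c^2*x*y ≠ 0)
    (hD1 : (b + c*x) * m * n ≠ 0) (hD2 : (b + c*y) * m * n ≠ 0) :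
    (b + c * (P - (P - b*c*x*y / ((b + c*x) * (b + c*y) * m * n - c^2*x*y)))) * m * n *
      (c*x / ((b + c*x) * m * n) * (c*y / ((b + c*y) * m * n)))
    = c * (P - (P - b*c*x*y / ((b + c*x) * (b + c*y) * m * n - c^2*x*y))) := by
  have ht : ∀ t : ℝ, P - (P - t) = t := fun t => by ring
  rw [ht]
  have h1 : b + c*x ≠ 0 := by intro h; apply hD1; rw [h]; ring
  have h2 : b + c*y ≠ 0 := by intro h; apply hD2; rw [h]; ring
  have hm : m ≠ 0 := by intro h; apply hD1; rw [h]; ring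
  have hn : n ≠ 0 := by intro h; apply hD1; rw [h]; ring
  field_simp
  ring

theorem stmt17 (p : ℕ) (hp : 0 < p) (α μ δ A B : ℝ)
    (hα0 : 0 ≤ α) (hαp : α < p) (hμ0 : 0 ≤ μ) (hμ1 : μ < 1)
    (hδ0 : 0 ≤ δ) (hδ1 : δ ≤ 1) (hB : -1 ≤ B) (hBA : B < A) (hA : A ≤ 1)
    (β : ℝ) (hβ0 : 0 ≤ β) (hβp : β < p)
    (a₁ a₂ ξ : ℝ)
    (ha₁ : a₁ = (A - B) * ((p : ℝ) - α) /
      (((1 - B) + (A - B) * ((p : ℝ) - α)) * (1 - μ) * ((p : ℝ) + δ)))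
    (ha₂ : a₂ = (A - B) * ((p : ℝ) - β) /
      (((1 - B) + (A - B) * ((p : ℝ) - β)) * (1 - μ) * ((p : ℝ) + δ)))
    (hdenpos : 0 < ((1 - B) + (A - B) * ((p : ℝ) - α)) * ((1 - B) + (A - B) * ((p : ℝ) - β)) *
        (1 - μ) * ((p : ℝ) + δ) - (A - B) ^ 2 * ((p : ℝ) - α) * ((p : ℝ) - β))
    (hξ : ξ = (p : ℝ) - (1 - B) * (A - B) * ((p : ℝ) - α) * ((p : ℝ) - β) /
      (((1 - B) + (A - B) * ((p : ℝ) - α)) * ((1 - B) + (A - B) * ((p : ℝ) - β)) *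
        (1 - μ) * ((p : ℝ) + δ) - (A - B) ^ 2 * ((p : ℝ) - α) * ((p : ℝ) - β))) :
    (∑' k : ℕ, wOrd p α μ δ A B k * (if k = 0 then a₁ else 0) = (A - B) * ((p : ℝ) - α)) ∧
    (∑' k : ℕ, wOrd p β μ δ A B k * (if k = 0 then a₂ else 0) = (A - B) * ((p : ℝ) - β)) ∧
    (∑' k : ℕ, wOrd p ξ μ δ A B k * (if k = 0 then a₁ * a₂ else 0)
      = (A - B) * ((p : ℝ) - ξ)) := by

  have h1B : (0:ℝ) < 1 - B := by linarith
  have hAB : (0:ℝ) < A - B := by linarith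
  have hμ : (0:ℝ) < 1 - μ := by linarith
  have hpδ : (0:ℝ) < (p:ℝ) + δ := by
    have : (1:ℝ) ≤ (p:ℝ) := by exact_mod_cast hp
    linarith
  have hX : (0:ℝ) < (p:ℝ) - α := by linarith
  have hY : (0:ℝ) < (p:ℝ) - β := by linarith
  have hD1 : ((1 - B) + (A - B) * ((p:ℝ) - α)) ≠ 0 := by positivity
  have hD2 : ((1 - B) + (A - B) * ((p:ℝ) - β)) ≠ 0 := by positivity
  have hts : ∀ (γ a : ℝ), ∑' k : ℕ, wOrd p γ μ δ A B k * (if k = 0 then a else 0)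
      = ((1 - B) + (A - B) * ((p:ℝ) - γ)) * (1 - μ) * ((p:ℝ) + δ) * a := by
    intro γ a
    rw [tsum_eq_single 0 (by intro b hb; simp [hb])]
    simp [wOrd_zero p γ μ δ A B hpδ]
  refine ⟨?_, ?_, ?_⟩
  · rw [hts, ha₁]; field_simp
  · rw [hts, ha₂]; field_simp
  · rw [hts, ha₁, ha₂, hξ]
    have hE : ((1 - B) + (A - B) * ((p:ℝ) - α)) * ((1 - B) + (A - B) * ((p:ℝ) - β)) *
        (1 - μ) * ((p:ℝ) + δ) - (A - B)^2 * ((p:ℝ) - α) * ((p:ℝ) - β) ≠ 0 := hdenpos.ne'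
    have hD1' : ((1 - B) + (A - B) * ((p:ℝ) - α)) * (1 - μ) * ((p:ℝ) + δ) ≠ 0 := by positivity
    have hD2' : ((1 - B) + (A - B) * ((p:ℝ) - β)) * (1 - μ) * ((p:ℝ) + δ) ≠ 0 := by positivity
    exact stmt17_alg (p:ℝ) (1 - B) (A - B) ((p:ℝ) - α) ((p:ℝ) - β) (1 - μ) ((p:ℝ) + δ) hE hD1' hD2'
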